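/- Polyharmonic logarithmic Sobolev inequality with explicit constant, conditional on the classical logarithmic Sobolev inequality. Let N ≥ 1 and m ≥ 1 be integers and let u : ℝ^N → ℝ be a Schwartz function with ∫_{ℝ^N} u(x)² dx = 1. Suppose that u satisfies the classical logarithmic Sobolev inequality ∫_{ℝ^N} u(x)² log|u(x)| dx ≤ (N/4) · log( (2/(πeN)) · S₁(u) ), where the integrand |u|² log|u| is understood to vanish where u = 0. Then ∫_{ℝ^N} u(x)² log|u(x)| dx ≤ (N/(4m)) · log( (2/(πeN))^m · S_m(u) ). -/

import Mathlib

open MeasureTheory Real FourierTransform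
open scoped ENNReal

noncomputable section

/-- Partial derivative in the `i`-th coordinate direction. -/
def pd {N : ℕ} (i : Fin N) (u : EuclideanSpace ℝ (Fin N) → ℝ) :
    EuclideanSpace ℝ (Fin N) → ℝ :=
  fun x => fderiv ℝ u x (EuclideanSpace.single i 1)

/-- Iterated partial derivative along a list of coordinate directions. -/
def pdIter {N : ℕ} (l : List (Fin N)) (u : EuclideanSpace ℝ (Fin N) → ℝ) :
    EuclideanSpace ℝ (Fin N) → ℝ :=
  l.foldr pd u

/-- The Laplacian on `ℝ^N`. -/
def lap {N : ℕ} (u : EuclideanSpace ℝ (Fin N) → ℝ) : EuclideanSpace ℝ (Fin N) → ℝ :=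
  fun x => ∑ i, pd i (pd i u) x

/-- The `k`-fold iterated Laplacian `Δ^k`. -/
def iterLap {N : ℕ} (k : ℕ) (u : EuclideanSpace ℝ (Fin N) → ℝ) :
    EuclideanSpace ℝ (Fin N) → ℝ :=
  lap^[k] u

/-- The `j`-th Dirichlet energy: the sum, over all tuples `(i₁,…,i_j) ∈ {1,…,N}^j`,
of the squared `L²` norms of the iterated partial derivatives of order `j`. -/
def dirEnergy {N : ℕ} (j : ℕ) (u : EuclideanSpace ℝ (Fin N) → ℝ) : ℝ :=
  ∑ p : Fin j → Fin N, ∫ x : EuclideanSpace ℝ (Fin N), (pdIter (List.ofFn p) u x) ^ 2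

section Aux
variable {N : ℕ}

abbrev E (N : ℕ) := EuclideanSpace ℝ (Fin N)

def pdS (i : Fin N) (f : SchwartzMap (E N) ℝ) : SchwartzMap (E N) ℝ :=
  LineDeriv.lineDerivOp (EuclideanSpace.single i (1:ℝ)) f

lemma pd_coe (i : Fin N) (f : SchwartzMap (E N) ℝ) : pd i ⇑f = ⇑(pdS i f) := by
  funext x
  simp [pd, pdS, SchwartzMap.lineDerivOp_apply_eq_fderiv]

-- product of Schwartz functions integrable
lemma sch_int_mul (f g : SchwartzMap (E N) ℝ) :
    Integrable (fun x => f x * g x) (volume : Measure (E N)) := by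
  exact (g.integrable).bdd_mul f.continuous.aestronglyMeasurable
    (Filter.Eventually.of_forall fun x => SchwartzMap.norm_le_seminorm ℝ f x)

-- IBP
lemma ibp (i : Fin N) (f g : SchwartzMap (E N) ℝ) :
    ∫ x, f x * pd i (⇑g) x = - ∫ x, pd i (⇑f) x * g x := by
  have := integral_mul_fderiv_eq_neg_fderiv_mul_of_integrable
    (μ := (volume : Measure (E N))) (f := ⇑f) (g := ⇑g) (v := EuclideanSpace.single i 1)
    ?_ ?_ ?_ (fun x _ => f.differentiableAt) (fun x _ => g.differentiableAt)
  · exact this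
  · rw [show (fun x => fderiv ℝ (⇑f) x (EuclideanSpace.single i 1) * g x)
      = fun x => (pdS i f) x * g x by funext x; simp [pdS, SchwartzMap.lineDerivOp_apply_eq_fderiv]]
    exact sch_int_mul _ _
  · rw [show (fun x => f x * fderiv ℝ (⇑g) x (EuclideanSpace.single i 1))
      = fun x => f x * (pdS i g) x by funext x; simp [pdS, SchwartzMap.lineDerivOp_apply_eq_fderiv]]
    exact sch_int_mul _ _
  · exact sch_int_mul _ _

lemma cs (f g : SchwartzMap (E N) ℝ) :
    (∫ x, f x * g x) ^ 2 ≤ (∫ x, f x ^ 2) * (∫ x, g x ^ 2) := by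
  have key : ∀ t : ℝ, 0 ≤ (∫ x, g x ^ 2) * (t * t) + (2 * ∫ x, f x * g x) * t
      + ∫ x, f x ^ 2 := by
    intro t
    have h1 : Integrable (fun x => f x ^ 2) (volume : Measure (E N)) := by
      simpa [pow_two] using sch_int_mul f f
    have h2 : Integrable (fun x => g x ^ 2) (volume : Measure (E N)) := by
      simpa [pow_two] using sch_int_mul g g
    have h3 := sch_int_mul f g
    have : 0 ≤ ∫ x, (f x + t * g x) ^ 2 := integral_nonneg fun x => sq_nonneg _
    calc (0:ℝ) ≤ ∫ x, (f x + t * g x) ^ 2 := this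
    _ = ∫ x, (g x ^ 2 * (t * t) + (2 * (f x * g x)) * t + f x ^ 2) := by
        congr 1; funext x; ring
    _ = (∫ x, g x ^ 2) * (t * t) + (2 * ∫ x, f x * g x) * t + ∫ x, f x ^ 2 := by
        rw [integral_add (show Integrable (fun x => g x ^ 2 * (t * t) + 2 * (f x * g x) * t) volume from (h2.mul_const (t*t)).add ((h3.const_mul 2).mul_const t)) h1,
          integral_add (h2.mul_const (t*t)) ((h3.const_mul 2).mul_const t),
          integral_mul_const, integral_mul_const, integral_const_mul]
    _ = _ := by ring_nf
  have := discrim_le_zero key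
  rw [discrim] at this
  nlinarith [this]

lemma pd_comm (i k : Fin N) (f : SchwartzMap (E N) ℝ) (x : E N) :
    pd i (pd k ⇑f) x = pd k (pd i ⇑f) x := by
  have hdf : Differentiable ℝ (fderiv ℝ (⇑f)) :=
    (contDiff_infty_iff_fderiv.mp (f.smooth ⊤)).2.differentiable (by simp)
  have key : ∀ v w : E N, fderiv ℝ (fun y => fderiv ℝ (⇑f) y v) x w
      = fderiv ℝ (fderiv ℝ (⇑f)) x w v := by
    intro v w
    rw [fderiv_clm_apply (hdf x) (differentiableAt_const v)]
    simp
  have symm : IsSymmSndFDerivAt ℝ (⇑f) x :=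
    ((f.smooth ⊤).contDiffAt).isSymmSndFDerivAt (by rw [minSmoothness_of_isRCLikeNormedField]; exact WithTop.coe_le_coe.mpr le_top)
  show fderiv ℝ (fun y => fderiv ℝ (⇑f) y (EuclideanSpace.single k 1)) x (EuclideanSpace.single i 1)
    = fderiv ℝ (fun y => fderiv ℝ (⇑f) y (EuclideanSpace.single i 1)) x (EuclideanSpace.single k 1)
  rw [key, key, symm.eq]

def lapS (w : SchwartzMap (E N) ℝ) : SchwartzMap (E N) ℝ := ∑ i : Fin N, pdS i (pdS i w)

lemma lapS_apply (w : SchwartzMap (E N) ℝ) (x : E N) :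
    lapS w x = ∑ i : Fin N, pdS i (pdS i w) x := by
  have := map_sum (FunLike.coeAddMonoidHom (SchwartzMap (E N) ℝ) (E N) ℝ) (fun i => pdS i (pdS i w)) Finset.univ
  rw [lapS]
  calc (∑ i : Fin N, pdS i (pdS i w) : SchwartzMap (E N) ℝ) x
      = (FunLike.coeAddMonoidHom (SchwartzMap (E N) ℝ) (E N) ℝ) (∑ i : Fin N, pdS i (pdS i w)) x := rfl
  _ = _ := by rw [this]; simp [SchwartzMap.coe_coeHom]

-- L1 : ∑ i ∫ (pdS i w)^2 = - ∫ w * lapS w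
lemma L1 (w : SchwartzMap (E N) ℝ) :
    ∑ i : Fin N, ∫ x, (pdS i w) x ^ 2 = - ∫ x, w x * lapS w x := by
  have : ∀ i : Fin N, ∫ x, w x * (pdS i (pdS i w)) x = - ∫ x, (pdS i w) x ^ 2 := by
    intro i
    have := ibp i w (pdS i w)
    rw [pd_coe] at this
    rw [this]
    congr 1
    congr 1
    funext x
    rw [pd_coe, pow_two]
  have int1 : ∫ x, w x * lapS w x = ∑ i : Fin N, ∫ x, w x * (pdS i (pdS i w)) x := by
    rw [show (fun x => w x * lapS w x) = fun x => ∑ i : Fin N, w x * (pdS i (pdS i w)) x by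
      funext x; rw [lapS_apply, Finset.mul_sum]]
    rw [integral_finset_sum _ (fun i _ => sch_int_mul w (pdS i (pdS i w)))]
  rw [int1]
  rw [Finset.sum_congr rfl (fun i _ => this i)]
  simp

lemma pdS_comm (i k : Fin N) (w : SchwartzMap (E N) ℝ) :
    pdS i (pdS k w) = pdS k (pdS i w) := by
  apply SchwartzMap.ext
  intro x
  have := pd_comm i k w x
  rw [pd_coe k w] at this
  rw [show pd i ⇑(pdS k w) = ⇑(pdS i (pdS k w)) from pd_coe _ _] at this
  rw [pd_coe i w, show pd k ⇑(pdS i w) = ⇑(pdS k (pdS i w)) from pd_coe _ _] at this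
  exact this

lemma cross (i k : Fin N) (w : SchwartzMap (E N) ℝ) :
    ∫ x, (pdS i (pdS i w)) x * (pdS k (pdS k w)) x = ∫ x, (pdS i (pdS k w)) x ^ 2 := by
  have h1 := ibp k (pdS i (pdS i w)) (pdS k w)
  rw [pd_coe k (pdS k w), pd_coe k (pdS i (pdS i w))] at h1
  have h2 := ibp i (pdS k (pdS i w)) (pdS k w)
  rw [pd_coe i (pdS k w), pd_coe i (pdS k (pdS i w))] at h2
  rw [h1, pdS_comm k i (pdS i w), ← h2, pdS_comm k i w]
  congr 1; funext x; rw [pow_two]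

lemma L3 (w : SchwartzMap (E N) ℝ) :
    ∫ x, (lapS w) x ^ 2 = ∑ i : Fin N, ∑ k : Fin N, ∫ x, (pdS i (pdS k w)) x ^ 2 := by
  have expand : (fun x => (lapS w) x ^ 2)
      = fun x => ∑ i : Fin N, ∑ k : Fin N, (pdS i (pdS i w)) x * (pdS k (pdS k w)) x := by
    funext x
    rw [lapS_apply, pow_two, Finset.sum_mul_sum]
  rw [expand, integral_finset_sum _ (fun i _ => ?_)]
  · exact Finset.sum_congr rfl fun i _ => by
      rw [integral_finset_sum _ (fun k _ => sch_int_mul _ _)]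
      exact Finset.sum_congr rfl fun k _ => cross i k w
  · exact MeasureTheory.integrable_finset_sum _ (fun k _ => sch_int_mul _ _)

lemma keyInterp {ι : Type*} [Fintype ι] (w : ι → SchwartzMap (E N) ℝ) :
    (∑ q : ι, ∑ i : Fin N, ∫ x, (pdS i (w q)) x ^ 2) ^ 2
      ≤ (∑ q : ι, ∫ x, (w q) x ^ 2)
        * (∑ q : ι, ∑ i : Fin N, ∑ k : Fin N, ∫ x, (pdS i (pdS k (w q))) x ^ 2) := by
  set A : ι → ℝ := fun q => ∫ x, (w q) x ^ 2 with hA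
  set C : ι → ℝ := fun q => ∑ i : Fin N, ∑ k : Fin N, ∫ x, (pdS i (pdS k (w q))) x ^ 2 with hC
  have hAnn : ∀ q, 0 ≤ A q := fun q => integral_nonneg fun x => sq_nonneg _
  have hCnn : ∀ q, 0 ≤ C q := fun q => Finset.sum_nonneg fun i _ =>
    Finset.sum_nonneg fun k _ => integral_nonneg fun x => sq_nonneg _
  have hB : ∀ q, ∑ i : Fin N, ∫ x, (pdS i (w q)) x ^ 2 ≤ Real.sqrt (A q * C q) := by
    intro q
    rw [L1]
    have hcs := cs (w q) (lapS (w q))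
    rw [L3] at hcs
    have hnn : (0:ℝ) ≤ -∫ x, (w q) x * (lapS (w q)) x := by
      rw [← L1]
      exact Finset.sum_nonneg fun i _ => integral_nonneg fun x => sq_nonneg _
    rw [show -∫ x, (w q) x * (lapS (w q)) x
        = |∫ x, (w q) x * (lapS (w q)) x| by rw [abs_of_nonpos (by linarith)]]
    rw [← Real.sqrt_sq_eq_abs]
    exact Real.sqrt_le_sqrt hcs
  have hTle : ∑ q : ι, ∑ i : Fin N, ∫ x, (pdS i (w q)) x ^ 2
      ≤ ∑ q : ι, Real.sqrt (A q * C q) := Finset.sum_le_sum fun q _ => hB q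
  have hTnn : (0:ℝ) ≤ ∑ q : ι, ∑ i : Fin N, ∫ x, (pdS i (w q)) x ^ 2 :=
    Finset.sum_nonneg fun q _ => Finset.sum_nonneg fun i _ =>
      integral_nonneg fun x => sq_nonneg _
  calc (∑ q : ι, ∑ i : Fin N, ∫ x, (pdS i (w q)) x ^ 2) ^ 2
      ≤ (∑ q : ι, Real.sqrt (A q * C q)) ^ 2 := by
        exact pow_le_pow_left₀ hTnn hTle 2
    _ ≤ (∑ q : ι, A q) * (∑ q : ι, C q) :=
        Finset.sum_sq_le_sum_mul_sum_of_sq_eq_mul _ (fun q _ => hAnn q) (fun q _ => hCnn q)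
          (fun q _ => Real.sq_sqrt (mul_nonneg (hAnn q) (hCnn q)))

def pdIterS : List (Fin N) → SchwartzMap (E N) ℝ → SchwartzMap (E N) ℝ
  | [], f => f
  | i :: l, f => pdS i (pdIterS l f)

lemma pdIter_coe (l : List (Fin N)) (f : SchwartzMap (E N) ℝ) :
    pdIter l ⇑f = ⇑(pdIterS l f) := by
  induction l with
  | nil => rfl
  | cons i l ih =>
    show pd i (pdIter l ⇑f) = _
    rw [ih, pd_coe]
    rfl

lemma sum_pi_succ {n : ℕ} {β : Type*} [AddCommMonoid β] (F : (Fin (n+1) → Fin N) → β) :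
    ∑ p : Fin (n+1) → Fin N, F p = ∑ i : Fin N, ∑ q : Fin n → Fin N, F (Fin.cons i q) := by
  rw [← (Fin.consEquiv (fun _ : Fin (n+1) => Fin N)).sum_comp F, Fintype.sum_prod_type]
  apply Finset.sum_congr rfl; intro i _
  apply Finset.sum_congr rfl; intro q _
  congr 1

lemma ofFn_cons {n : ℕ} (i : Fin N) (q : Fin n → Fin N) :
    List.ofFn (Fin.cons i q) = i :: List.ofFn q := by
  rw [List.ofFn_succ]
  simp

lemma dirEnergy_succ (n : ℕ) (v : EuclideanSpace ℝ (Fin N) → ℝ) :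
    dirEnergy (n+1) v
      = ∑ i : Fin N, ∑ q : Fin n → Fin N, ∫ x, (pd i (pdIter (List.ofFn q) v)) x ^ 2 := by
  rw [dirEnergy, sum_pi_succ]
  apply Finset.sum_congr rfl; intro i _
  apply Finset.sum_congr rfl; intro q _
  congr 1
  funext x
  rw [ofFn_cons]
  rfl

lemma interp (u : SchwartzMap (E N) ℝ) (j : ℕ) :
    (dirEnergy (j+1) ⇑u) ^ 2 ≤ dirEnergy j ⇑u * dirEnergy (j+2) ⇑u := by
  set W : (Fin j → Fin N) → SchwartzMap (E N) ℝ := fun q => pdIterS (List.ofFn q) u with hW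
  have e0 : dirEnergy j ⇑u = ∑ q : Fin j → Fin N, ∫ x, (W q) x ^ 2 := by
    rw [dirEnergy]
    exact Finset.sum_congr rfl fun q _ => by rw [pdIter_coe]
  have e1 : dirEnergy (j+1) ⇑u = ∑ q : Fin j → Fin N, ∑ i : Fin N, ∫ x, (pdS i (W q)) x ^ 2 := by
    rw [dirEnergy_succ, Finset.sum_comm]
    apply Finset.sum_congr rfl; intro q _
    apply Finset.sum_congr rfl; intro i _
    rw [pdIter_coe, pd_coe]
  have e2 : dirEnergy (j+2) ⇑u
      = ∑ q : Fin j → Fin N, ∑ i : Fin N, ∑ k : Fin N, ∫ x, (pdS i (pdS k (W q))) x ^ 2 := by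
    rw [dirEnergy_succ]
    have : ∀ i : Fin N, ∑ p : Fin (j+1) → Fin N, ∫ x, (pd i (pdIter (List.ofFn p) ⇑u)) x ^ 2
        = ∑ k : Fin N, ∑ q : Fin j → Fin N, ∫ x, (pdS i (pdS k (W q))) x ^ 2 := by
      intro i
      rw [sum_pi_succ]
      apply Finset.sum_congr rfl; intro k _
      apply Finset.sum_congr rfl; intro q _
      congr 1
      funext x
      rw [ofFn_cons, show pdIter (k :: List.ofFn q) ⇑u = pd k (pdIter (List.ofFn q) ⇑u) from rfl,
        pdIter_coe, pd_coe, pd_coe]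
    rw [Finset.sum_congr rfl fun i _ => this i]
    rw [Finset.sum_congr rfl fun i (_ : i ∈ Finset.univ) =>
      (Finset.sum_comm : ∑ k : Fin N, ∑ q : Fin j → Fin N, ∫ x, (pdS i (pdS k (W q))) x ^ 2
        = ∑ q : Fin j → Fin N, ∑ k : Fin N, ∫ x, (pdS i (pdS k (W q))) x ^ 2)]
    exact Finset.sum_comm
  rw [e0, e1, e2]
  exact keyInterp W

lemma dirEnergy_zero (u : SchwartzMap (E N) ℝ) : dirEnergy 0 ⇑u = ∫ x, (u x) ^ 2 := by
  rw [dirEnergy]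
  haveI : Unique (Fin 0 → Fin N) := Pi.uniqueOfIsEmpty _
  rw [Fintype.sum_unique]
  rfl

lemma dirEnergy_nonneg (j : ℕ) (v : EuclideanSpace ℝ (Fin N) → ℝ) : 0 ≤ dirEnergy j v :=
  Finset.sum_nonneg fun p _ => integral_nonneg fun x => sq_nonneg _

lemma dirEnergy_one_pos (hN : 1 ≤ N) (u : SchwartzMap (E N) ℝ)
    (hnorm : ∫ x, (u x) ^ 2 = 1) : 0 < dirEnergy 1 ⇑u := by
  rcases lt_or_ge 0 (dirEnergy 1 ⇑u) with h | h
  · exact h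
  exfalso
  have e1 : dirEnergy 1 ⇑u = ∑ i : Fin N, ∫ x, (pdS i u) x ^ 2 := by
    rw [dirEnergy_succ]
    haveI : Unique (Fin 0 → Fin N) := Pi.uniqueOfIsEmpty _
    apply Finset.sum_congr rfl; intro i _
    rw [Fintype.sum_unique]
    have he : pd i (pdIter (List.ofFn (default : Fin 0 → Fin N)) ⇑u) = ⇑(pdS i u) := by
      rw [show pdIter (List.ofFn (default : Fin 0 → Fin N)) ⇑u = ⇑u from rfl, pd_coe]
    rw [he]
  have hz : ∀ i : Fin N, ∫ x, (pdS i u) x ^ 2 = 0 := by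
    intro i
    have hn : ∀ i : Fin N, (0:ℝ) ≤ ∫ x, (pdS i u) x ^ 2 :=
      fun i => integral_nonneg fun x => sq_nonneg _
    have : ∑ i : Fin N, ∫ x, (pdS i u) x ^ 2 ≤ 0 := e1 ▸ h
    have := (Finset.sum_eq_zero_iff_of_nonneg (fun i _ => hn i)).mp
      (le_antisymm this (Finset.sum_nonneg fun i _ => hn i))
    exact this i (Finset.mem_univ i)
  have hpd0 : ∀ (i : Fin N) (x : E N), (pdS i u) x = 0 := by
    intro i x
    have hint : Integrable (fun x => (pdS i u) x ^ 2) (volume : Measure (E N)) := by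
      simpa [pow_two] using sch_int_mul (pdS i u) (pdS i u)
    have hae := (integral_eq_zero_iff_of_nonneg (fun x => sq_nonneg ((pdS i u) x)) hint).mp (hz i)
    have := (Continuous.ae_eq_iff_eq (volume : Measure (E N))
      ((pdS i u).continuous.pow 2) continuous_const).mp hae
    have h2 : (pdS i u) x ^ 2 = 0 := congrFun this x
    exact (pow_eq_zero_iff two_ne_zero).mp h2
  have hfd : ∀ x : E N, fderiv ℝ (⇑u) x = 0 := by
    intro x
    apply ContinuousLinearMap.coe_injective
    apply Module.Basis.ext (EuclideanSpace.basisFun (Fin N) ℝ).toBasis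
    intro i
    have := hpd0 i x
    rw [pdS, SchwartzMap.lineDerivOp_apply_eq_fderiv] at this
    simpa [EuclideanSpace.basisFun_apply] using this
  have hconst : ∀ x : E N, u x = u 0 := fun x =>
    is_const_of_fderiv_eq_zero u.differentiable hfd x 0
  haveI : Nonempty (Fin N) := ⟨⟨0, hN⟩⟩
  haveI : Nontrivial (E N) := by
    refine ⟨⟨0, EuclideanSpace.single ⟨0, hN⟩ 1, ?_⟩⟩
    intro hcontra
    have := congrArg (fun f : E N => f ⟨0, hN⟩) hcontra
    simp [EuclideanSpace.single] at this
  have hvol : (volume : Measure (E N)) Set.univ = ∞ :=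
    measure_univ_of_isAddLeftInvariant _
  have hint : Integrable (fun x => (u x) ^ 2) (volume : Measure (E N)) := by
    simpa [pow_two] using sch_int_mul u u
  rw [show (fun x : E N => (u x) ^ 2) = fun _ => (u 0) ^ 2 by
    funext x; rw [hconst x]] at hint
  rcases (integrable_const_iff).mp hint with hc | hc
  · rw [show (fun x : E N => (u x)^2) = fun _ => (u 0)^2 by funext x; rw [hconst x]] at hnorm
    rw [hc] at hnorm
    simp at hnorm
  · exact (measure_ne_top (volume : Measure (E N)) Set.univ) hvol


end Aux

/-- **Polyharmonic logarithmic Sobolev inequality with explicit constant, conditional on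
the classical logarithmic Sobolev inequality.** If `u` is a Schwartz function on `ℝ^N`
with `∫ u² = 1` satisfying `∫ u² log|u| ≤ (N/4) log((2/(πeN)) S₁(u))`, then
`∫ u² log|u| ≤ (N/(4m)) log((2/(πeN))^m S_m(u))`. (Note `Real.log 0 = 0`, so the
integrand `u² log|u|` vanishes where `u = 0`.) -/
theorem polyharmonic_logSobolev_of_classical
    (N m : ℕ) (hN : 1 ≤ N) (hm : 1 ≤ m)
    (u : SchwartzMap (EuclideanSpace ℝ (Fin N)) ℝ)
    (hnorm : ∫ x : EuclideanSpace ℝ (Fin N), (u x) ^ 2 = 1)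
    (hLS : ∫ x : EuclideanSpace ℝ (Fin N), (u x) ^ 2 * Real.log |u x|
      ≤ ((N : ℝ) / 4) *
          Real.log (2 / (π * Real.exp 1 * N) * dirEnergy 1 (fun y => u y))) :
    ∫ x : EuclideanSpace ℝ (Fin N), (u x) ^ 2 * Real.log |u x|
      ≤ ((N : ℝ) / (4 * m)) *
          Real.log ((2 / (π * Real.exp 1 * N)) ^ m * dirEnergy m (fun y => u y)) := by
  set a : ℕ → ℝ := fun j => dirEnergy j (fun y => u y) with ha
  have ha0 : a 0 = 1 := by
    have := dirEnergy_zero u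
    simp only [ha]
    rw [show (fun y => u y) = ⇑u from rfl, this, hnorm]
  have hanonneg : ∀ j, 0 ≤ a j := fun j => dirEnergy_nonneg j _
  have hinterp : ∀ j, a (j+1) ^ 2 ≤ a j * a (j+2) := fun j => interp u j
  have ha1 : 0 < a 1 := dirEnergy_one_pos hN u hnorm
  have hpos : ∀ j, 0 < a j := by
    have H : ∀ j, 0 < a j ∧ 0 < a (j+1) := by
      intro j
      induction j with
      | zero => exact ⟨ha0 ▸ one_pos, ha1⟩
      | succ j ih =>
        refine ⟨ih.2, ?_⟩
        have h2 := hinterp j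
        have : 0 < a j * a (j+2) := lt_of_lt_of_le (pow_pos ih.2 2) h2
        rcases eq_or_lt_of_le (hanonneg (j+2)) with h | h
        · exfalso; nlinarith [this]
        · exact h
    exact fun j => (H j).1
  have hchain : ∀ j, a 1 * a j ≤ a (j+1) := by
    intro j
    induction j with
    | zero => rw [ha0, mul_one]
    | succ j ih =>
      have h1 : a 1 * a j * a (j+1) ≤ a (j+1) * a (j+1) :=
        mul_le_mul_of_nonneg_right ih (hanonneg _)
      have h2 : a (j+1) * a (j+1) ≤ a j * a (j+2) := by
        have := hinterp j; nlinarith [hanonneg (j+1)]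
      have h3 : a j * (a 1 * a (j+1)) ≤ a j * a (j+2) := by nlinarith
      exact le_of_mul_le_mul_left h3 (hpos j)
  have hpow : a 1 ^ m ≤ a m := by
    clear hm
    induction m with
    | zero => rw [pow_zero, ha0]
    | succ j ih =>
      calc a 1 ^ (j+1) = a 1 * a 1 ^ j := by ring
      _ ≤ a 1 * a j := mul_le_mul_of_nonneg_left ih (le_of_lt ha1)
      _ ≤ a (j+1) := hchain j
  set c : ℝ := 2 / (π * Real.exp 1 * N) with hc
  have hcpos : 0 < c := by
    apply div_pos two_pos
    have : (0:ℝ) < N := by exact_mod_cast Nat.lt_of_lt_of_le Nat.zero_lt_one hN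
    positivity
  have hkey : (c * a 1) ^ m ≤ c ^ m * a m := by
    rw [mul_pow]
    exact mul_le_mul_of_nonneg_left hpow (pow_nonneg (le_of_lt hcpos) m)
  have hlog : (m : ℝ) * Real.log (c * a 1) ≤ Real.log (c ^ m * a m) := by
    rw [← Real.log_pow]
    exact Real.log_le_log (pow_pos (mul_pos hcpos ha1) m) hkey
  have hm0 : (m : ℝ) ≠ 0 := by
    exact_mod_cast Nat.one_le_iff_ne_zero.mp hm
  have harith : ((N:ℝ) / 4) * Real.log (c * a 1)
      = ((N:ℝ) / (4 * m)) * ((m:ℝ) * Real.log (c * a 1)) := by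
    field_simp
  calc ∫ x : EuclideanSpace ℝ (Fin N), (u x) ^ 2 * Real.log |u x|
      ≤ ((N : ℝ) / 4) * Real.log (c * a 1) := hLS
    _ = ((N:ℝ) / (4 * m)) * ((m:ℝ) * Real.log (c * a 1)) := harith
    _ ≤ ((N:ℝ) / (4 * m)) * Real.log (c ^ m * a m) := by
        apply mul_le_mul_of_nonneg_left hlog
        apply div_nonneg (Nat.cast_nonneg N)
        positivity
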